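/- Let d ≥ 1 and m ≥ 1, and let C ⊆ (Fin (2*m+1) → ZMod d) be a code with exactly d^m codewords such that any two distinct codewords have Hamming distance at least m+2. Let Φ ∈ EuclideanSpace ℂ (Fin (2*m+1) → ZMod d) be the unit vector with Φ(x) = (Real.sqrt (d^m))⁻¹ if x ∈ C and Φ(x) = 0 otherwise. Then for every subset B ⊆ Fin (2*m+1) with |B| = m, with A = Bᶜ its complement (so |A| = m+1), the family of vectors (φ_k) indexed by k : B → ZMod d, where φ_k ∈ EuclideanSpace ℂ (A → ZMod d) is defined by φ_k(y) = Real.sqrt (d^m) · Φ(x_{k,y}) with x_{k,y} the word agreeing with k on B and with y on A, is an orthonormal family. (Hence Φ is an AME(2m+1,d) state constructed from the MDS code C.) -/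

import Mathlib

/-- **MDS codes give AME(2m+1,d) states.**
Let `Φ` be the unit vector `(1/√(d^m)) ∑_{c ∈ C} |c⟩` built from an MDS code `C`
of length `2m+1` and minimum distance `m+2` with `d^m` codewords.  Then for every
bipartition of the `2m+1` parties into `B` (with `|B| = m`) and `A = Bᶜ` (with
`|A| = m+1`), the family of vectors `φ_k (y) = √(d^m) · Φ (x_{k,y})`, indexed by
`k : B → ZMod d`, where `x_{k,y}` agrees with `k` on `B` and with `y` on `A`, is
orthonormal.  Hence `Φ` has the Schmidt form `(1/√(d^m)) ∑_k |k⟩_B |φ_k⟩_A` for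
every such bipartition, i.e. `Φ` is absolutely maximally entangled. -/
theorem mds_state_is_AME_odd (d m : ℕ) [NeZero d] (hm : 1 ≤ m)
    (C : Finset (Fin (2 * m + 1) → ZMod d))
    (hcard : C.card = d ^ m)
    (hdist : ∀ c ∈ C, ∀ c' ∈ C, c ≠ c' → m + 2 ≤ hammingDist c c')
    (Φ : EuclideanSpace ℂ (Fin (2 * m + 1) → ZMod d))
    (hΦ : ∀ x : Fin (2 * m + 1) → ZMod d,
      Φ x = if x ∈ C then (((Real.sqrt ((d : ℝ) ^ m))⁻¹ : ℝ) : ℂ) else 0)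
    (B : Finset (Fin (2 * m + 1))) (hB : B.card = m) :
    Orthonormal ℂ (fun k : {i // i ∈ B} → ZMod d =>
      (WithLp.equiv 2 (({i // i ∈ Bᶜ} → ZMod d) → ℂ)).symm
        (fun y : {i // i ∈ Bᶜ} → ZMod d =>
          ((Real.sqrt ((d : ℝ) ^ m) : ℝ) : ℂ) *
            Φ (fun i : Fin (2 * m + 1) =>
              if h : i ∈ B then k ⟨i, h⟩ else y ⟨i, Finset.mem_compl.mpr h⟩))) := by
  classical
  have hd : 0 < d := Nat.pos_of_ne_zero (NeZero.ne d)
  have hsq : Real.sqrt ((d : ℝ) ^ m) ≠ 0 := by positivity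
  have hcompl : Bᶜ.card = m + 1 := by
    rw [Finset.card_compl, hB, Fintype.card_fin]; omega
  -- restriction map to B
  set r : (Fin (2 * m + 1) → ZMod d) → ({i // i ∈ B} → ZMod d) :=
    fun c i => c i.val with hr
  -- if two codewords agree on B they are equal
  have agreeB : ∀ c ∈ C, ∀ c' ∈ C, r c = r c' → c = c' := by
    intro c hc c' hc' h
    by_contra hne
    have hsub : Finset.univ.filter (fun i => c i ≠ c' i) ⊆ Bᶜ := by
      intro i hi
      simp only [Finset.mem_filter, Finset.mem_univ, true_and] at hi
      rw [Finset.mem_compl]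
      intro hiB
      exact hi (congrFun h ⟨i, hiB⟩)
    have : hammingDist c c' ≤ m + 1 := by
      calc hammingDist c c' ≤ Bᶜ.card := Finset.card_le_card hsub
        _ = m + 1 := hcompl
    have := hdist c hc c' hc' hne
    omega
  -- if two codewords agree on Bᶜ they are equal
  have agreeA : ∀ c ∈ C, ∀ c' ∈ C, (∀ i ∈ Bᶜ, c i = c' i) → c = c' := by
    intro c hc c' hc' h
    by_contra hne
    have hsub : Finset.univ.filter (fun i => c i ≠ c' i) ⊆ B := by
      intro i hi
      simp only [Finset.mem_filter, Finset.mem_univ, true_and] at hi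
      by_contra hiB
      exact hi (h i (Finset.mem_compl.mpr hiB))
    have : hammingDist c c' ≤ m := by
      calc hammingDist c c' ≤ B.card := Finset.card_le_card hsub
        _ = m := hB
    have := hdist c hc c' hc' hne
    omega
  -- every k is hit by a unique codeword
  have hsurj : ∀ k : {i // i ∈ B} → ZMod d, ∃ c ∈ C, r c = k := by
    intro k
    have himg : C.image r = Finset.univ := by
      apply Finset.eq_univ_of_card
      rw [Finset.card_image_of_injOn (fun c hc c' hc' h => agreeB c hc c' hc' h), hcard]
      simp [Fintype.card_fun, ZMod.card, Fintype.card_coe, hB]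
    have : k ∈ C.image r := by rw [himg]; exact Finset.mem_univ k
    simpa using this
  rw [orthonormal_iff_ite]
  intro k k'
  obtain ⟨c, hc, hck⟩ := hsurj k
  obtain ⟨c', hc', hck'⟩ := hsurj k'
  -- the key evaluation of the vectors
  have hval : ∀ (kk : {i // i ∈ B} → ZMod d) (cc : Fin (2 * m + 1) → ZMod d),
      cc ∈ C → r cc = kk → ∀ y : {i // i ∈ Bᶜ} → ZMod d,
      ((Real.sqrt ((d : ℝ) ^ m) : ℝ) : ℂ) *
          Φ (fun i : Fin (2 * m + 1) =>
            if h : i ∈ B then kk ⟨i, h⟩ else y ⟨i, Finset.mem_compl.mpr h⟩) =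
        if y = (fun j : {i // i ∈ Bᶜ} => cc j.val) then 1 else 0 := by
    intro kk cc hcc hcck y
    set x : Fin (2 * m + 1) → ZMod d :=
      fun i => if h : i ∈ B then kk ⟨i, h⟩ else y ⟨i, Finset.mem_compl.mpr h⟩ with hx
    have hmem : x ∈ C ↔ y = (fun j : {i // i ∈ Bᶜ} => cc j.val) := by
      constructor
      · intro hxC
        have hrx : r x = kk := by
          funext i
          simp [hr, hx, i.2]
        have : x = cc := agreeB x hxC cc hcc (hrx.trans hcck.symm)
        funext j
        have hj : ¬ (j.val ∈ B) := Finset.mem_compl.mp j.2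
        have := congrFun this j.val
        simpa [hx, hj] using this
      · intro hy
        have : x = cc := by
          funext i
          by_cases h : i ∈ B
          · simp only [hx, dif_pos h]
            exact (congrFun hcck ⟨i, h⟩).symm
          · simp only [hx, dif_neg h]
            exact congrFun hy ⟨i, Finset.mem_compl.mpr h⟩
        rw [this]; exact hcc
    rw [hΦ]
    by_cases hxC : x ∈ C
    · rw [if_pos hxC, if_pos (hmem.mp hxC)]
      rw [← Complex.ofReal_mul, mul_inv_cancel₀ hsq, Complex.ofReal_one]
    · rw [if_neg hxC, if_neg (fun h => hxC (hmem.mpr h)), mul_zero]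
  simp only [PiLp.inner_apply, WithLp.equiv_symm_apply, PiLp.toLp_apply, RCLike.inner_apply',
    hval k c hc hck, hval k' c' hc' hck']
  simp only [apply_ite (starRingEnd ℂ), map_one, map_zero, ite_mul, one_mul, zero_mul]
  rw [Finset.sum_ite_eq' Finset.univ (fun j : {i // i ∈ Bᶜ} => c j.val)
    (fun y => if y = (fun j : {i // i ∈ Bᶜ} => c' j.val) then (1 : ℂ) else 0)]
  simp only [Finset.mem_univ, if_true]
  congr 1
  · -- the two conditions are equivalent
    have : ((fun j : {i // i ∈ Bᶜ} => c j.val) = (fun j : {i // i ∈ Bᶜ} => c' j.val)) ↔ k = k' := by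
      constructor
      · intro h
        have hcc' : c = c' := by
          apply agreeA c hc c' hc'
          intro i hi
          exact congrFun h ⟨i, hi⟩
        rw [← hck, ← hck', hcc']
      · intro h
        have : c = c' := agreeB c hc c' hc' (by rw [hck, hck', h])
        rw [this]
      
    simp [this]
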